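/- Let m ≥ 3 and let c be a WOMNI weight tensor that induces flat correlation. Then the spread of the diagonal cumulative weights is bounded: max_{q ∈ {1,…,m}} α(q,q) − min_{q ∈ {1,…,m}} α(q,q) ≤ 9/2. -/
import Mathlib


open Finset

/-- Cumulative weight `α(k,q) = ∑_ℓ c(q,k,ℓ)`. -/
noncomputable def alphaW (m : ℕ) (c : Fin m → Fin m → Fin m → ℝ) (k q : Fin m) : ℝ :=
  ∑ ℓ, c q k ℓ

/-- `β_q(s1,s2) = α(s1,q) − α(s2,q)`. -/
noncomputable def betaW (m : ℕ) (c : Fin m → Fin m → Fin m → ℝ) (q s1 s2 : Fin m) : ℝ :=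
  alphaW m c s1 q - alphaW m c s2 q

/-- WOMNI (weighted Omnibus) weight tensor. -/
def IsWOMNI (m : ℕ) (c : Fin m → Fin m → Fin m → ℝ) : Prop :=
  (∀ q i j, c q i j = c q j i) ∧
  (∀ q i j, q ≠ i → q ≠ j → c q i j = 0) ∧
  (∀ i, c i i i = 1) ∧
  (∀ q i, q ≠ i → c q i i = 0) ∧
  (∀ i j, i ≠ j → c i i j ∈ Set.Icc (0:ℝ) 1 ∧ c i i j + c j i j = 1)

/-- The tensor induces flat correlation: `S(s1,s2) = ∑_q β_q(s1,s2)²` is the same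
for all pairs `s1 ≠ s2`. -/
def InducesFlat (m : ℕ) (c : Fin m → Fin m → Fin m → ℝ) : Prop :=
  ∀ s1 s2 t1 t2 : Fin m, s1 ≠ s2 → t1 ≠ t2 →
    ∑ q, (betaW m c q s1 s2)^2 = ∑ q, (betaW m c q t1 t2)^2

/-- Off-diagonal cumulative weight: for `k ≠ q`, `α(k,q) = 1 - c k k q`. -/
lemma alphaW_off {m : ℕ} {c : Fin m → Fin m → Fin m → ℝ} (hc : IsWOMNI m c)
    {k q : Fin m} (h : k ≠ q) : alphaW m c k q = 1 - c k k q := by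
  have hsum : alphaW m c k q = c q k q := by
    unfold alphaW
    refine Finset.sum_eq_single q (fun ℓ _ hℓ => hc.2.1 q k ℓ (Ne.symm h) (Ne.symm hℓ))
      (fun h' => absurd (Finset.mem_univ q) h')
  have h1 := (hc.2.2.2.2 k q h).2
  linarith [hsum, h1]

/-- Diagonal cumulative weight: `α(q,q) = 1 + ∑_{ℓ≠q} c q q ℓ`. -/
lemma alphaW_diag {m : ℕ} {c : Fin m → Fin m → Fin m → ℝ} (hc : IsWOMNI m c)
    (q : Fin m) : alphaW m c q q = 1 + ∑ ℓ ∈ univ.erase q, c q q ℓ := by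
  unfold alphaW
  rw [← Finset.add_sum_erase _ _ (Finset.mem_univ q), hc.2.2.1 q]

/-- `α(q,q) ≥ 1`. -/
lemma one_le_alphaW_diag {m : ℕ} {c : Fin m → Fin m → Fin m → ℝ} (hc : IsWOMNI m c)
    (q : Fin m) : 1 ≤ alphaW m c q q := by
  rw [alphaW_diag hc q]
  have : (0:ℝ) ≤ ∑ ℓ ∈ univ.erase q, c q q ℓ :=
    Finset.sum_nonneg fun ℓ hℓ => (hc.2.2.2.2 q ℓ (Ne.symm (Finset.mem_erase.1 hℓ).1)).1.1
  linarith

theorem stmt_6 (m : ℕ) (hm : 3 ≤ m) (c : Fin m → Fin m → Fin m → ℝ)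
    (hc : IsWOMNI m c) (hflat : InducesFlat m c)
    (M L : ℝ) (hM : IsGreatest (Set.range fun q : Fin m => alphaW m c q q) M)
    (hL : IsLeast (Set.range fun q : Fin m => alphaW m c q q) L) :
    M - L ≤ 9/2 := by
  obtain ⟨a, ha⟩ := hM.1
  obtain ⟨b, hb⟩ := hL.1
  replace ha : alphaW m c a a = M := ha
  replace hb : alphaW m c b b = L := hb
  -- find a third index v distinct from a and b
  obtain ⟨v, hv⟩ : ∃ v : Fin m, v ∉ ({a, b} : Finset (Fin m)) := by
    by_contra h
    push_neg at h
    have hsub : (univ : Finset (Fin m)) ⊆ {a, b} := fun x _ => h x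
    have := Finset.card_le_card hsub
    have h2 : ({a, b} : Finset (Fin m)).card ≤ 2 :=
      le_trans (Finset.card_insert_le _ _) (by simp)
    simp [Finset.card_univ] at this
    omega
  simp only [Finset.mem_insert, Finset.mem_singleton, not_or] at hv
  obtain ⟨hva, hvb⟩ := hv
  have hav : a ≠ v := Ne.symm hva
  have hbv : b ≠ v := Ne.symm hvb
  set V := alphaW m c v v with hV
  have hL1 : 1 ≤ L := by rw [← hb]; exact one_le_alphaW_diag hc b
  have hV1 : 1 ≤ V := one_le_alphaW_diag hc v
  have hVM : V ≤ M := hM.2 ⟨v, rfl⟩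
  have hLV : L ≤ V := hL.2 ⟨v, rfl⟩
  -- bounds on individual c values
  have hcva : c v v a ∈ Set.Icc (0:ℝ) 1 := (hc.2.2.2.2 v a hva).1
  have hcav : c a a v ∈ Set.Icc (0:ℝ) 1 := (hc.2.2.2.2 a v hav).1
  have hcvb : c v v b ∈ Set.Icc (0:ℝ) 1 := (hc.2.2.2.2 v b hvb).1
  have hcbv : c b b v ∈ Set.Icc (0:ℝ) 1 := (hc.2.2.2.2 b v hbv).1
  -- Lower bound on S(a,v)
  have low : (M - 1)^2 + (V - 1)^2 ≤ ∑ q, (betaW m c q a v)^2 := by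
    have hba : betaW m c a a v = M - (1 - c v v a) := by
      unfold betaW
      rw [ha, alphaW_off hc hva]
    have hbv' : betaW m c v a v = (1 - c a a v) - V := by
      unfold betaW
      rw [alphaW_off hc hav]
    have hM1 : 1 ≤ M := le_trans hL1 (le_trans hLV hVM)
    have h1 : (M - 1)^2 ≤ (betaW m c a a v)^2 := by
      rw [hba]; nlinarith [hcva.1, hcva.2]
    have h2 : (V - 1)^2 ≤ (betaW m c v a v)^2 := by
      rw [hbv']; nlinarith [hcav.1, hcav.2]
    have hsub : ({a, v} : Finset (Fin m)) ⊆ univ := Finset.subset_univ _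
    have hpair : ∑ q ∈ ({a, v} : Finset (Fin m)), (betaW m c q a v)^2
        = (betaW m c a a v)^2 + (betaW m c v a v)^2 := Finset.sum_pair hav
    have := Finset.sum_le_sum_of_subset_of_nonneg hsub
      (fun q _ _ => sq_nonneg (betaW m c q a v))
    rw [hpair] at this
    linarith
  -- Upper bound on S(b,v)
  have up : ∑ q, (betaW m c q b v)^2 ≤ L^2 + V^2 + (V - 1) + (L - 1) := by
    have hvmem : v ∈ univ.erase b := Finset.mem_erase.2 ⟨Ne.symm hbv, Finset.mem_univ v⟩
    have hsplit : ∑ q, (betaW m c q b v)^2 = (betaW m c b b v)^2 +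
        ((betaW m c v b v)^2 + ∑ q ∈ (univ.erase b).erase v, (betaW m c q b v)^2) := by
      rw [← Finset.add_sum_erase _ _ (Finset.mem_univ b),
          ← Finset.add_sum_erase _ _ hvmem]
    have hbb : betaW m c b b v = L - (1 - c v v b) := by
      unfold betaW; rw [hb, alphaW_off hc hvb]
    have hbvv : betaW m c v b v = (1 - c b b v) - V := by
      unfold betaW; rw [alphaW_off hc hbv]
    have h1 : (betaW m c b b v)^2 ≤ L^2 := by
      rw [hbb]; nlinarith [hcvb.1, hcvb.2]
    have h2 : (betaW m c v b v)^2 ≤ V^2 := by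
      rw [hbvv]; nlinarith [hcbv.1, hcbv.2]
    have h3 : ∑ q ∈ (univ.erase b).erase v, (betaW m c q b v)^2 ≤
        (∑ q ∈ (univ.erase b).erase v, c v v q) +
        (∑ q ∈ (univ.erase b).erase v, c b b q) := by
      rw [← Finset.sum_add_distrib]
      refine Finset.sum_le_sum fun q hq => ?_
      have hqv : q ≠ v := (Finset.mem_erase.1 hq).1
      have hqb : q ≠ b := (Finset.mem_erase.1 (Finset.mem_erase.1 hq).2).1
      have hbq : betaW m c q b v = c v v q - c b b q := by
        unfold betaW
        rw [alphaW_off hc (Ne.symm hqb), alphaW_off hc (Ne.symm hqv)]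
        ring
      have hxv := (hc.2.2.2.2 v q (Ne.symm hqv)).1
      have hxb := (hc.2.2.2.2 b q (Ne.symm hqb)).1
      rw [hbq]
      nlinarith [hxv.1, hxv.2, hxb.1, hxb.2]
    have h4 : ∑ q ∈ (univ.erase b).erase v, c v v q ≤ V - 1 := by
      have hsub : (univ.erase b).erase v ⊆ univ.erase v := by
        intro q hq
        exact Finset.mem_erase.2 ⟨(Finset.mem_erase.1 hq).1, Finset.mem_univ q⟩
      have := Finset.sum_le_sum_of_subset_of_nonneg hsub
        (fun q hq _ => (hc.2.2.2.2 v q (Ne.symm (Finset.mem_erase.1 hq).1)).1.1)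
      have hdiag := alphaW_diag hc v
      rw [← hV] at hdiag
      linarith
    have h5 : ∑ q ∈ (univ.erase b).erase v, c b b q ≤ L - 1 := by
      have hsub : (univ.erase b).erase v ⊆ univ.erase b := Finset.erase_subset _ _
      have := Finset.sum_le_sum_of_subset_of_nonneg hsub
        (fun q hq _ => (hc.2.2.2.2 b q (Ne.symm (Finset.mem_erase.1 hq).1)).1.1)
      have hdiag := alphaW_diag hc b
      rw [hb] at hdiag
      linarith
    rw [hsplit]
    linarith
  have hflat' := hflat a v b v hav hbv
  rw [hflat'] at low
  -- final arithmetic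
  nlinarith [low, up, hL1, hV1, hVM, hLV, sq_nonneg (M - L), sq_nonneg (M + L - 2),
    mul_nonneg (by linarith : (0:ℝ) ≤ L - 1) (by linarith : (0:ℝ) ≤ M - L)]
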